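/- Let S be a compact semigroup and suppose u,v,x,y ∈ S satisfy uv = xy. Suppose that for every continuous homomorphism π from S onto a finite semigroup, either there exists t with π(u)t = π(x) and π(v) = tπ(y), or there exists τ with π(x)τ = π(u) and π(y) = τπ(v) (t, τ ranging over the image with adjoined identity). If S is residually finite as a topological semigroup (continuous homomorphisms to finite semigroups separate points) and S is an inverse limit of a countable inverse system of finite semigroups, then there exists t ∈ S¹ with ut = x and v = ty, or there exists τ ∈ S¹ with xτ = u and y = τv. -/
import Mathlib


/-- A continuous surjective homomorphism from `S` onto a finite semigroup. -/
structure FinQuot (S : Type*) [Semigroup S] [TopologicalSpace S] where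
  T : Type
  [sg : Semigroup T]
  [fin : Finite T]
  [ts : TopologicalSpace T]
  [disc : DiscreteTopology T]
  f : S → T
  surj : Function.Surjective f
  cont : Continuous f
  map_mul : ∀ a b : S, f (a * b) = f a * f b

attribute [instance] FinQuot.sg FinQuot.fin FinQuot.ts FinQuot.disc

/-- Finitely many finite quotients can be combined into a single finite quotient. -/
lemma FinQuot.exists_combined {S : Type*} [Semigroup S] [TopologicalSpace S]
    {ι : Type} [Finite ι] (q : ι → FinQuot S) :
    ∃ Q : FinQuot S, ∀ (i : ι) (s s' : S), Q.f s = Q.f s' → (q i).f s = (q i).f s' := by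
  classical
  set F0 : S → ∀ i, (q i).T := fun s i => (q i).f s with hF0
  have hmul : ∀ a b : S, F0 (a * b) = F0 a * F0 b := by
    intro a b; funext i; exact (q i).map_mul a b
  let sub : Subsemigroup (∀ i, (q i).T) :=
    { carrier := Set.range F0
      mul_mem' := by
        rintro _ _ ⟨a, rfl⟩ ⟨b, rfl⟩
        exact ⟨a * b, hmul a b⟩ }
  refine ⟨{ T := sub
            f := fun s => ⟨F0 s, ⟨s, rfl⟩⟩
            surj := by rintro ⟨_, s, rfl⟩; exact ⟨s, rfl⟩
            cont := by
              refine Continuous.subtype_mk ?_ _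
              exact continuous_pi fun i => (q i).cont
            map_mul := by
              intro a b
              exact Subtype.ext (hmul a b) }, ?_⟩
  intro i s s' h
  have := congrArg Subtype.val h
  exact congrFun this i

/-- Let `S` be a compact topological semigroup, residually finite (continuous homomorphisms
onto finite semigroups separate points), realized as the inverse limit of a countable
inverse system of finite (discrete) semigroups. If `uv = xy` and every continuous
homomorphism onto a finite semigroup is of the first or of the second type, then there is
`t ∈ S¹` with `ut = x` and `v = ty`, or `τ ∈ S¹` with `xτ = u` and `y = τv`. -/
theorem equidivisibility_from_finite_quotients {S : Type*} [Semigroup S]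
    [TopologicalSpace S] [CompactSpace S] [ContinuousMul S]
    (Sn : ℕ → Type) [∀ n, Semigroup (Sn n)] [∀ n, Finite (Sn n)]
    [∀ n, TopologicalSpace (Sn n)] [∀ n, DiscreteTopology (Sn n)]
    (π : ∀ m n, n ≤ m → (Sn m →ₙ* Sn n))
    (hπsurj : ∀ m n (h : n ≤ m), Function.Surjective (π m n h))
    (hππ : ∀ k m n (h1 : m ≤ k) (h2 : n ≤ m) (s : Sn k),
      π m n h2 (π k m h1 s) = π k n (h2.trans h1) s)
    (p : ∀ n, S →ₙ* Sn n)
    (hpc : ∀ n, Continuous (p n))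
    (hpsurj : ∀ n, Function.Surjective (p n))
    (hcomp : ∀ m n (h : n ≤ m) (s : S), π m n h (p m s) = p n s)
    (hsep : ∀ s s' : S, s ≠ s' → ∃ q : FinQuot S, q.f s ≠ q.f s')
    (hlim : ∀ f : ∀ n, Sn n, (∀ m n (h : n ≤ m), π m n h (f m) = f n) →
      ∃ s : S, ∀ n, p n s = f n)
    (u v x y : S) (huv : u * v = x * y)
    (htype : ∀ q : FinQuot S,
      (∃ t : WithOne q.T, (q.f u : WithOne q.T) * t = (q.f x : WithOne q.T) ∧
        (q.f v : WithOne q.T) = t * (q.f y : WithOne q.T)) ∨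
      (∃ τ : WithOne q.T, (q.f x : WithOne q.T) * τ = (q.f u : WithOne q.T) ∧
        (q.f y : WithOne q.T) = τ * (q.f v : WithOne q.T))) :
    (∃ t : WithOne S, (u : WithOne S) * t = (x : WithOne S) ∧
      (v : WithOne S) = t * (y : WithOne S)) ∨
    (∃ τ : WithOne S, (x : WithOne S) * τ = (u : WithOne S) ∧
      (y : WithOne S) = τ * (v : WithOne S)) := by
  classical
  by_contra hcon
  push_neg at hcon
  obtain ⟨hA, hB⟩ := hcon
  -- the `t = 1` case of the conclusion fails, so `u ≠ x` or `v ≠ y`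
  have hone : u ≠ x ∨ v ≠ y := by
    by_contra h
    push_neg at h
    exact hA 1 (by rw [mul_one, h.1]) (by rw [one_mul, h.2])
  -- no `t ∈ S` works for either type
  have hA' : ∀ t : S, ¬(u * t = x ∧ v = t * y) := by
    rintro t ⟨h1, h2⟩
    exact hA (t : WithOne S) (by rw [← WithOne.coe_mul, h1]) (by rw [← WithOne.coe_mul, h2])
  have hB' : ∀ τ : S, ¬(x * τ = u ∧ y = τ * v) := by
    rintro τ ⟨h1, h2⟩
    exact hB (τ : WithOne S) (by rw [← WithOne.coe_mul, h1]) (by rw [← WithOne.coe_mul, h2])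
  -- closed witness sets for each finite quotient
  set Z1 : FinQuot S → Set S :=
    fun q => {t | q.f (u * t) = q.f x ∧ q.f v = q.f (t * y)} with hZ1
  set Z2 : FinQuot S → Set S :=
    fun q => {τ | q.f (x * τ) = q.f u ∧ q.f y = q.f (τ * v)} with hZ2
  have hZ1closed : ∀ q, IsClosed (Z1 q) := by
    intro q
    exact (isClosed_eq (q.cont.comp (continuous_mul_left u)) continuous_const).inter
      (isClosed_eq continuous_const (q.cont.comp (continuous_mul_right y)))
  have hZ2closed : ∀ q, IsClosed (Z2 q) := by
    intro q
    exact (isClosed_eq (q.cont.comp (continuous_mul_left x)) continuous_const).inter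
      (isClosed_eq continuous_const (q.cont.comp (continuous_mul_right v)))
  have hZ1empty : (Set.univ : Set S) ∩ ⋂ q, Z1 q = ∅ := by
    rw [Set.univ_inter, Set.eq_empty_iff_forall_notMem]
    intro t ht
    simp only [Set.mem_iInter] at ht
    refine hA' t ⟨?_, ?_⟩
    · by_contra h
      obtain ⟨q, hq⟩ := hsep _ _ h
      exact hq (ht q).1
    · by_contra h
      obtain ⟨q, hq⟩ := hsep _ _ h
      exact hq (ht q).2
  have hZ2empty : (Set.univ : Set S) ∩ ⋂ q, Z2 q = ∅ := by
    rw [Set.univ_inter, Set.eq_empty_iff_forall_notMem]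
    intro τ hτ
    simp only [Set.mem_iInter] at hτ
    refine hB' τ ⟨?_, ?_⟩
    · by_contra h
      obtain ⟨q, hq⟩ := hsep _ _ h
      exact hq (hτ q).1
    · by_contra h
      obtain ⟨q, hq⟩ := hsep _ _ h
      exact hq (hτ q).2
  obtain ⟨F1, hF1⟩ := isCompact_univ.elim_finite_subfamily_closed Z1 hZ1closed hZ1empty
  obtain ⟨F2, hF2⟩ := isCompact_univ.elim_finite_subfamily_closed Z2 hZ2closed hZ2empty
  -- a quotient separating the failing equality in the `t = 1` case
  obtain ⟨q0, hq0⟩ : ∃ q0 : FinQuot S, ¬(q0.f u = q0.f x ∧ q0.f v = q0.f y) := by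
    rcases hone with h | h
    · obtain ⟨q, hq⟩ := hsep _ _ h
      exact ⟨q, fun hh => hq hh.1⟩
    · obtain ⟨q, hq⟩ := hsep _ _ h
      exact ⟨q, fun hh => hq hh.2⟩
  -- combine all the relevant quotients into one
  set F : Finset (FinQuot S) := insert q0 (F1 ∪ F2) with hF
  obtain ⟨Q, hQ0⟩ := FinQuot.exists_combined
    (fun i : Fin F.card => ((F.equivFin.symm i : F) : FinQuot S))
  have hQ : ∀ (q : FinQuot S), q ∈ F → ∀ s s' : S, Q.f s = Q.f s' → q.f s = q.f s' := by
    intro q hq s s' h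
    have := hQ0 (F.equivFin ⟨q, hq⟩) s s' h
    rwa [Equiv.symm_apply_apply] at this
  rcases htype Q with ⟨t, ht1, ht2⟩ | ⟨τ, ht1, ht2⟩
  · refine WithOne.cases_on t ?_ ?_ ht1 ht2 <;> clear ht1 ht2
    · intro ht1 ht2
      rw [mul_one, WithOne.coe_inj] at ht1
      rw [one_mul, WithOne.coe_inj] at ht2
      refine hq0 ⟨?_, ?_⟩
      · exact hQ q0 (Finset.mem_insert_self _ _) u x ht1
      · exact hQ q0 (Finset.mem_insert_self _ _) v y ht2
    · intro a ht1 ht2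
      obtain ⟨s, rfl⟩ := Q.surj a
      rw [← WithOne.coe_mul, WithOne.coe_inj] at ht1 ht2
      rw [← Q.map_mul] at ht1 ht2
      have hs : s ∈ (Set.univ : Set S) ∩ ⋂ q ∈ F1, Z1 q := by
        refine ⟨trivial, ?_⟩
        simp only [Set.mem_iInter]
        intro q hq
        have hmem : q ∈ F := Finset.mem_insert_of_mem (Finset.mem_union_left _ hq)
        exact ⟨hQ q hmem (u * s) x ht1, hQ q hmem v (s * y) ht2⟩
      rw [hF1] at hs
      exact hs
  · refine WithOne.cases_on τ ?_ ?_ ht1 ht2 <;> clear ht1 ht2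
    · intro ht1 ht2
      rw [mul_one, WithOne.coe_inj] at ht1
      rw [one_mul, WithOne.coe_inj] at ht2
      refine hq0 ⟨?_, ?_⟩
      · exact (hQ q0 (Finset.mem_insert_self _ _) x u ht1).symm
      · exact (hQ q0 (Finset.mem_insert_self _ _) y v ht2).symm
    · intro a ht1 ht2
      obtain ⟨s, rfl⟩ := Q.surj a
      rw [← WithOne.coe_mul, WithOne.coe_inj] at ht1 ht2
      rw [← Q.map_mul] at ht1 ht2
      have hs : s ∈ (Set.univ : Set S) ∩ ⋂ q ∈ F2, Z2 q := by
        refine ⟨trivial, ?_⟩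
        simp only [Set.mem_iInter]
        intro q hq
        have hmem : q ∈ F := Finset.mem_insert_of_mem (Finset.mem_union_right _ hq)
        exact ⟨hQ q hmem (x * s) u ht1, hQ q hmem y (s * v) ht2⟩
      rw [hF2] at hs
      exact hs
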